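/- arXiv:2604.18626 — 2 statements merged into one kernel-verified Lean document; each statement's English description precedes it below -/
import Mathlib

section
/- No permutation p of {1,...,n} whose first entry is 1 has sort-number exactly 2 under SC_231. -/
/-- One step-by-step implementation of the `SC_231` stack-sorting machine.
`sc231Aux input stack out`: the next input entry is pushed onto the stack unless
pushing it would create a consecutive occurrence of the pattern `231` read from
top to bottom among the stack entries (i.e. the incoming `x` on top of `y`, `z`
with `z < x < y`), in which case the top of the stack is popped and appended to
the output; once the input is exhausted the remaining stack entries are popped. -/
def sc231Aux : List ℕ → List ℕ → List ℕ → List ℕ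
  | [], stack, out => out ++ stack
  | x :: rest, y :: z :: s, out =>
      if z < x ∧ x < y then sc231Aux (x :: rest) (z :: s) (out ++ [y])
      else sc231Aux rest (x :: y :: z :: s) out
  | x :: rest, stack, out => sc231Aux rest (x :: stack) out
termination_by input stack _ => 2 * input.length + stack.length
decreasing_by all_goals (simp; try omega)

/-- The consecutive-pattern-avoiding stack sort map `SC_231`. -/
def SC231 (p : List ℕ) : List ℕ := sc231Aux p [] []

/-- The list of entries that are *pre-popped* while `SC_231` processes the
input, i.e. popped while input entries still remain. -/
def prePopsAux : List ℕ → List ℕ → List ℕ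
  | [], _ => []
  | x :: rest, y :: z :: s =>
      if z < x ∧ x < y then y :: prePopsAux (x :: rest) (z :: s)
      else prePopsAux rest (x :: y :: z :: s)
  | x :: rest, stack => prePopsAux rest (x :: stack)
termination_by input stack => 2 * input.length + stack.length
decreasing_by all_goals (simp; try omega)

def prePops (p : List ℕ) : List ℕ := prePopsAux p []

/-- `p` has a peak: an interior position whose entry exceeds both neighbours. -/
def HasPeak (p : List ℕ) : Prop :=
  ∃ i, i + 2 < p.length ∧ p[i]! < p[i+1]! ∧ p[i+2]! < p[i+1]!

/-- `p` is a permutation of `{1, …, n}` (written as a list of its entries). -/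
def IsPermOf (n : ℕ) (p : List ℕ) : Prop := p.Perm (List.range' 1 n)

/-- `p` contains the (classical) pattern `q`. -/
def ContainsPat (p q : List ℕ) : Prop :=
  ∃ s : List ℕ, s.Sublist p ∧ s.length = q.length ∧
    ∀ i j, i < s.length → j < s.length → (s[i]! < s[j]! ↔ q[i]! < q[j]!)

def AvoidsPat (p q : List ℕ) : Prop := ¬ ContainsPat p q

/-- The sort-number of `p`: the least `k` with `SC_231^k(p)` peakless. -/
noncomputable def sortNum (p : List ℕ) : ℕ := sInf {k | ¬ HasPeak (SC231^[k] p)}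

lemma sc231Aux_nil (out stack : List ℕ) : sc231Aux [] stack out = out ++ stack := by rw [sc231Aux]

lemma sc231Aux_push0 (out : List ℕ) (x : ℕ) (rest : List ℕ) :
    sc231Aux (x::rest) [] out = sc231Aux rest [x] out := by rw [sc231Aux] <;> simp

lemma sc231Aux_push1 (out : List ℕ) (x y : ℕ) (rest : List ℕ) :
    sc231Aux (x::rest) [y] out = sc231Aux rest [x,y] out := by rw [sc231Aux] <;> simp

lemma sc231Aux_pop (out : List ℕ) (x y z : ℕ) (rest s : List ℕ) (h : z < x ∧ x < y) :
    sc231Aux (x::rest) (y::z::s) out = sc231Aux (x::rest) (z::s) (out ++ [y]) := by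
  rw [sc231Aux]; simp [h]

lemma sc231Aux_push2 (out : List ℕ) (x y z : ℕ) (rest s : List ℕ) (h : ¬(z < x ∧ x < y)) :
    sc231Aux (x::rest) (y::z::s) out = sc231Aux rest (x::y::z::s) out := by
  rw [sc231Aux]; simp [h]

lemma hasPeak_cons (x : ℕ) {l : List ℕ} (h : HasPeak l) : HasPeak (x :: l) := by
  obtain ⟨i, hi, h1, h2⟩ := h
  exact ⟨i+1, by simp only [List.length_cons]; omega, by simpa using h1, by simpa using h2⟩

lemma hasPeak_append (o : List ℕ) {l : List ℕ} (h : HasPeak l) : HasPeak (o ++ l) := by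
  induction o with
  | nil => simpa using h
  | cons a t ih => exact hasPeak_cons a ih

lemma hasPeak_reverse {l : List ℕ} (h : HasPeak l.reverse) : HasPeak l := by
  obtain ⟨i, hi, h1, h2⟩ := h
  simp only [List.length_reverse] at hi
  have e : ∀ k, k < l.length → l.reverse[k]! = l[l.length - 1 - k]! := by
    intro k hk
    rw [getElem!_pos _ _ (by simpa using hk), getElem!_pos _ _ (by omega),
      List.getElem_reverse]
  rw [e i (by omega), e (i+1) (by omega)] at h1
  rw [e (i+2) (by omega), e (i+1) (by omega)] at h2
  have e1 : l.length - 1 - (i+1) = l.length - 1 - (i+2) + 1 := by omega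
  have e2 : l.length - 1 - i = l.length - 1 - (i+2) + 2 := by omega
  rw [e2, e1] at h1
  rw [e1] at h2
  exact ⟨l.length - 1 - (i+2), by omega, h2, h1⟩

lemma ascent_peak : ∀ (l : List ℕ) (a b m : ℕ), a < b → m < b → (∀ x ∈ l, m < x) →
    List.Chain' (· ≠ ·) (b :: l) → HasPeak (a :: b :: (l ++ [m])) := by
  intro l
  induction l with
  | nil =>
    intro a b m hab hmb _ _
    exact ⟨0, by simp, by simp [hab], by simpa using hmb⟩
  | cons c t ih =>
    intro a b m hab hmb hmem hch
    rcases lt_trichotomy c b with h | h | h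
    · exact ⟨0, by simp, by simpa using hab, by simpa using h⟩
    · exact absurd h.symm (List.isChain_cons_cons.1 hch).1
    · have := ih b c m h (lt_trans hmb h) (fun x hx => hmem x (List.mem_cons_of_mem _ hx))
        (List.isChain_cons_cons.1 hch).2
      exact hasPeak_cons a this

lemma sc231Aux_perm (input stack out : List ℕ) :
    (sc231Aux input stack out).Perm (out ++ input ++ stack) := by
  induction input, stack, out using sc231Aux.induct with
  | case1 stack out => simp [sc231Aux_nil]
  | case2 x rest y z s out h ih =>
    rw [sc231Aux_pop _ _ _ _ _ _ h]
    refine ih.trans ?_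
    simp only [List.append_assoc, List.singleton_append, List.cons_append]
    refine List.Perm.append_left out ?_
    exact (List.Perm.swap x y _).trans ((List.perm_middle.symm).cons x)
  | case3 x rest y z s out h ih =>
    rw [sc231Aux_push2 _ _ _ _ _ _ h]
    refine ih.trans ?_
    simp only [List.append_assoc, List.cons_append]
    exact List.Perm.append_left out List.perm_middle
  | case4 x rest stack out h ih =>
    have e : sc231Aux (x :: rest) stack out = sc231Aux rest (x :: stack) out := by
      match stack, h with
      | [], _ => exact sc231Aux_push0 _ _ _
      | [y], _ => exact sc231Aux_push1 _ _ _ _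
      | y :: z :: s, h => exact absurd rfl (h y z s)
    rw [e]
    refine ih.trans ?_
    simp only [List.append_assoc, List.cons_append]
    exact List.Perm.append_left out List.perm_middle

lemma sc231Aux_last : ∀ (N : ℕ) (input s : List ℕ) (b : ℕ) (out : List ℕ),
    2 * input.length + s.length ≤ N →
    ∃ w, sc231Aux input (s ++ [b]) out = out ++ w ++ [b] := by
  intro N
  induction N with
  | zero =>
    intro input s b out hm
    have : input = [] := by cases input <;> simp_all
    subst this
    exact ⟨s, by simp [sc231Aux_nil]⟩
  | succ N ih =>
    intro input s b out hm
    match input with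
    | [] => exact ⟨s, by simp [sc231Aux_nil]⟩
    | x :: rest =>
      match s with
      | [] =>
        rw [List.nil_append, sc231Aux_push1]
        exact ih rest [x] b out (by simp at hm ⊢; omega)
      | [y] =>
        by_cases h : b < x ∧ x < y
        · rw [List.cons_append, List.nil_append, sc231Aux_pop _ _ _ _ _ _ h]
          obtain ⟨w, hw⟩ := ih (x :: rest) [] b (out ++ [y]) (by simp at hm ⊢; omega)
          exact ⟨y :: w, by simpa using hw⟩
        · rw [List.cons_append, List.nil_append, sc231Aux_push2 _ _ _ _ _ _ h]
          exact ih rest [x, y] b out (by simp at hm ⊢; omega)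
      | y :: z :: s' =>
        by_cases h : z < x ∧ x < y
        · rw [List.cons_append, List.cons_append, sc231Aux_pop _ _ _ _ _ _ h]
          obtain ⟨w, hw⟩ := ih (x :: rest) (z :: s') b (out ++ [y]) (by simp at hm ⊢; omega)
          exact ⟨y :: w, by simpa using hw⟩
        · rw [List.cons_append, List.cons_append, sc231Aux_push2 _ _ _ _ _ _ h]
          exact ih rest (x :: y :: z :: s') b out (by simp at hm ⊢; omega)

lemma main_peak : ∀ (N : ℕ) (input stack out : List ℕ),
    2 * input.length + stack.length ≤ N →
    (∀ x ∈ input, 1 < x) → (∀ x ∈ stack, 1 < x) →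
    (input ++ stack).Nodup →
    HasPeak (stack.reverse ++ input ++ [1]) →
    HasPeak (sc231Aux (input ++ [1]) stack out) := by
  intro N
  induction N with
  | zero =>
    intro input stack out hm _ _ _ hpk
    have h1 : input = [] := by cases input <;> simp_all
    have h2 : stack = [] := by cases stack <;> simp_all
    subst h1; subst h2
    obtain ⟨i, hi, _⟩ := hpk
    simp at hi
  | succ N ih =>
    intro input stack out hm hin hst hnd hpk
    match input with
    | [] =>
      -- the final `1` gets pushed, then everything is flushed
      have e : sc231Aux [1] stack out = out ++ 1 :: stack := by
        match stack with
        | [] => rw [sc231Aux_push0, sc231Aux_nil]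
        | [y] => rw [sc231Aux_push1, sc231Aux_nil]
        | y :: z :: s =>
          have hz : 1 < z := hst z (by simp)
          rw [sc231Aux_push2 _ _ _ _ _ _ (by omega), sc231Aux_nil]
      rw [List.nil_append, e]
      refine hasPeak_append out (hasPeak_reverse ?_)
      simpa using hpk
    | x :: rest =>
      have hx : 1 < x := hin x (by simp)
      match stack with
      | [] =>
        rw [List.cons_append, sc231Aux_push0]
        refine ih rest [x] out (by simp at hm ⊢; omega)
          (fun u hu => hin u (by simp [hu])) (by simpa using hx) ?_ ?_
        · refine (List.Perm.nodup_iff ?_).2 hnd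
          simpa using List.perm_middle.symm
        · simpa using hpk
      | [y] =>
        rw [List.cons_append, sc231Aux_push1]
        refine ih rest [x, y] out (by simp at hm ⊢; omega)
          (fun u hu => hin u (by simp [hu]))
          (fun u hu => by rcases List.mem_pair.1 hu with rfl | rfl
                          · exact hx
                          · exact hst u (by simp)) ?_ ?_
        · refine (List.Perm.nodup_iff ?_).2 hnd
          simpa using (List.perm_middle (a := x) (l₁ := rest) (l₂ := [y]))
        · have : ([x, y] : List ℕ).reverse ++ rest ++ [1] = [y].reverse ++ (x :: rest) ++ [1] := by
            simp
          rw [this]; exact hpk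
      | y :: z :: s =>
        by_cases h : z < x ∧ x < y
        · -- pop step: the new combined word has the ascent z < x, ends in 1 ⇒ peak
          rw [List.cons_append, sc231Aux_pop _ _ _ _ _ _ h]
          have hz : 1 < z := hst z (by simp)
          refine ih (x :: rest) (z :: s) (out ++ [y]) (by simp at hm ⊢; omega) hin
            (fun u hu => hst u (by simp at hu ⊢; tauto)) ?_ ?_
          · refine List.Nodup.sublist ?_ hnd
            refine List.Sublist.append (List.Sublist.refl _) ?_
            exact (List.sublist_cons_self y (z :: s))
          · have e2 : (z :: s).reverse ++ (x :: rest) ++ [1]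
                = s.reverse ++ (z :: x :: (rest ++ [1])) := by simp
            rw [e2]
            refine hasPeak_append _ (ascent_peak rest z x 1 h.1 hx
              (fun u hu => hin u (by simp [hu])) ?_)
            have : (x :: rest).Nodup := ((List.nodup_append.1 hnd).1)
            exact this.isChain
        · rw [List.cons_append, sc231Aux_push2 _ _ _ _ _ _ h]
          refine ih rest (x :: y :: z :: s) out (by simp at hm ⊢; omega)
            (fun u hu => hin u (by simp [hu]))
            (fun u hu => by rcases (by simpa using hu : u = x ∨ u = y ∨ u = z ∨ u ∈ s) with rfl | rfl | rfl | hu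
                            · exact hx
                            · exact hst u (by simp)
                            · exact hst u (by simp)
                            · exact hst u (by simp [hu])) ?_ ?_
          · refine (List.Perm.nodup_iff ?_).2 hnd
            simpa using (List.perm_middle (a := x) (l₁ := rest) (l₂ := y :: z :: s))
          · have e3 : (x :: y :: z :: s).reverse ++ rest ++ [1]
                = (y :: z :: s).reverse ++ (x :: rest) ++ [1] := by simp
            rw [e3]; exact hpk

/-- No permutation of `{1,…,n}` whose first entry is `1` has sort-number exactly `2`. -/
theorem first_entry_one_sortNum_ne_two (n : ℕ) (p : List ℕ) (hp : IsPermOf n p)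
    (hhead : p.head? = some 1) : sortNum p ≠ 2 := by
  intro h
  -- the set of good exponents is nonempty and 2 is its least element
  have hne : {k | ¬ HasPeak (SC231^[k] p)}.Nonempty := by
    by_contra h'
    rw [Set.not_nonempty_iff_eq_empty] at h'
    rw [sortNum, h', Nat.sInf_empty] at h
    exact absurd h (by omega)
  have hmem : ¬ HasPeak (SC231^[2] p) := by
    have := Nat.sInf_mem hne
    rwa [show sInf {k | ¬ HasPeak (SC231^[k] p)} = 2 from h] at this
  have h1 : HasPeak (SC231^[1] p) := by
    by_contra h'
    have := Nat.sInf_le (show 1 ∈ {k | ¬ HasPeak (SC231^[k] p)} from h')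
    rw [show sInf {k | ¬ HasPeak (SC231^[k] p)} = 2 from h] at this
    omega
  -- p = 1 :: w with all entries of w greater than 1
  obtain ⟨w, rfl⟩ : ∃ w, p = 1 :: w := by
    match p, hhead with
    | x :: w, hhead => exact ⟨w, by simp at hhead; rw [hhead]⟩
  have hndp : (1 :: w).Nodup := hp.nodup_iff.2 (List.nodup_range' _)
  have hw : ∀ x ∈ w, 1 < x := by
    intro x hx
    have hxp : x ∈ List.range' 1 n := hp.mem_iff.1 (by simp [hx])
    have h1x : 1 ≤ x := (List.mem_range'_1.1 hxp).1
    have : x ≠ 1 := by rintro rfl; exact (List.nodup_cons.1 hndp).1 hx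
    omega
  -- SC231 p ends with 1
  have e1 : SC231 (1 :: w) = sc231Aux w [1] [] := by rw [SC231, sc231Aux_push0]
  obtain ⟨w', hw'⟩ := sc231Aux_last (2 * w.length) w [] 1 [] (by simp)
  simp only [List.nil_append] at hw'
  have e2 : SC231 (1 :: w) = w' ++ [1] := by rw [e1, hw']
  -- w' is a permutation of w
  have hperm : w'.Perm w := by
    have hA : (sc231Aux w [1] []).Perm (w ++ [1]) := by simpa using sc231Aux_perm w [1] []
    rw [hw'] at hA
    have : (1 :: w').Perm (1 :: w) :=
      ((List.perm_append_singleton 1 w').symm.trans hA).trans (List.perm_append_singleton 1 w)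
    exact this.cons_inv
  have hw'1 : ∀ x ∈ w', 1 < x := fun x hx => hw x (hperm.mem_iff.1 hx)
  have hndw' : w'.Nodup := (hperm.nodup_iff).2 (List.nodup_cons.1 hndp).2
  -- SC231 (SC231 p) has a peak: contradiction
  apply hmem
  have hpk1 : HasPeak (w' ++ [1]) := by
    rw [show SC231^[1] (1 :: w) = SC231 (1 :: w) from Function.iterate_one SC231 ▸ rfl, e2] at h1
    exact h1
  have := main_peak (2 * w'.length) w' [] [] (by simp) hw'1 (by simp) (by simpa using hndw')
    (by simpa using hpk1)
  rw [show (SC231^[2]) (1 :: w) = SC231 (SC231 (1 :: w)) from by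
    rw [Function.iterate_succ_apply', Function.iterate_one], e2]
  exact this
end

section
/- The permutation 1,9,8,7,6,5,4,3,2 (i.e., 1 followed by 9 down to 2) has sort-number 1 under SC_231, and its complement 9,1,2,3,4,5,6,7,8 has sort-number 0; in particular the sum of sort-numbers of a permutation and its complement can equal 1 for arbitrarily large n. -/
lemma step_nil (stack out : List ℕ) : sc231Aux [] stack out = out ++ stack := by
  rw [sc231Aux]

lemma step_pop (x y z : ℕ) (rest s out : List ℕ) (h1 : z < x) (h2 : x < y) :
    sc231Aux (x :: rest) (y :: z :: s) out = sc231Aux (x :: rest) (z :: s) (out ++ [y]) := by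
  rw [sc231Aux]; simp [h1, h2]

lemma step_push1 (x y : ℕ) (rest out : List ℕ) :
    sc231Aux (x :: rest) [y] out = sc231Aux rest [x, y] out := by
  rw [sc231Aux]; intros; simp_all

lemma step_push0 (x : ℕ) (rest out : List ℕ) :
    sc231Aux (x :: rest) [] out = sc231Aux rest [x] out := by
  rw [sc231Aux]; intros; simp_all

lemma aux_desc (k : ℕ) : ∀ out : List ℕ,
    sc231Aux ((List.range' 2 (k+1)).reverse) [k+3, 1] out =
      out ++ (List.range' 3 (k+1)).reverse ++ [2, 1] := by
  induction k with
  | zero =>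
      intro out
      show sc231Aux [2] [3, 1] out = _
      rw [step_pop 2 3 1 [] [] out (by omega) (by omega), step_push1, step_nil]
      simp [List.range']
  | succ k ih =>
      intro out
      have hr : (List.range' 2 (k+2)).reverse = (k+3) :: (List.range' 2 (k+1)).reverse := by
        rw [show k+2 = (k+1)+1 from rfl, List.range'_1_concat]
        simp
        omega
      rw [hr, step_pop (k+3) (k+4) 1 _ [] out (by omega) (by omega),
        step_push1, ih]
      have hr3 : (List.range' 3 (k+2)).reverse = (k+4) :: (List.range' 3 (k+1)).reverse := by
        rw [show k+2 = (k+1)+1 from rfl, List.range'_1_concat]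
        simp
        omega
      rw [hr3]
      simp

lemma sc231_main (k : ℕ) :
    SC231 (1 :: (List.range' 2 (k+2)).reverse) = (List.range' 1 (k+3)).reverse := by
  have hr : (List.range' 2 (k+2)).reverse = (k+3) :: (List.range' 2 (k+1)).reverse := by
    rw [show k+2 = (k+1)+1 from rfl, List.range'_1_concat]; simp; omega
  rw [SC231, step_push0, hr, step_push1, aux_desc]
  have : List.range' 1 (k+3) = [1, 2] ++ List.range' 3 (k+1) := by
    rw [show k+3 = (k+2)+1 from rfl, List.range'_succ,
      show k+2 = (k+1)+1 from rfl, List.range'_succ]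
    rfl
  rw [this]
  simp

lemma getElem!_list (l : List ℕ) (i : ℕ) (h : i < l.length) : l[i]! = l[i] :=
  getElem!_pos l i h

lemma rev_range'_getElem! (n i : ℕ) (h : i < n) :
    ((List.range' 1 n).reverse)[i]! = n - i := by
  rw [getElem!_list _ i (by simp [h]), List.getElem_reverse, List.getElem_range']
  simp
  omega

lemma no_peak_desc (n : ℕ) : ¬ HasPeak ((List.range' 1 n).reverse) := by
  rintro ⟨i, hi, h1, h2⟩
  simp at hi
  rw [rev_range'_getElem! n i (by omega), rev_range'_getElem! n (i+1) (by omega)] at h1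
  omega

lemma comp_getElem! (n m j : ℕ) (h : j < m) :
    (n :: List.range' 1 m)[j+1]! = 1 + j := by
  rw [getElem!_list _ (j+1) (by simp; omega)]
  simp only [List.getElem_cons_succ, List.getElem_range']
  omega

lemma no_peak_comp (n m : ℕ) (hnm : 1 ≤ n) : ¬ HasPeak (n :: List.range' 1 m) := by
  rintro ⟨i, hi, h1, h2⟩
  simp at hi
  match i with
  | 0 =>
      rw [show (n :: List.range' 1 m)[0]! = n by
          rw [getElem!_list _ 0 (by simp)]; rfl,
        comp_getElem! n m 0 (by omega)] at h1
      omega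
  | j+1 =>
      rw [comp_getElem! n m (j+1) (by omega), comp_getElem! n m (j+2) (by omega)] at h2
      omega

lemma p_getElem! (k j : ℕ) (h : j < k+2) :
    (1 :: (List.range' 2 (k+2)).reverse)[j+1]! = k + 3 - j := by
  rw [getElem!_list _ (j+1) (by simp; omega)]
  simp only [List.getElem_cons_succ, List.getElem_reverse, List.getElem_range',
    List.length_reverse, List.length_range']
  omega

lemma has_peak_p (k : ℕ) : HasPeak (1 :: (List.range' 2 (k+2)).reverse) := by
  refine ⟨0, by simp, ?_, ?_⟩
  · rw [show (1 :: (List.range' 2 (k+2)).reverse)[0]! = 1 by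
        rw [getElem!_list _ 0 (by simp)]; rfl,
      p_getElem! k 0 (by omega)]
    omega
  · rw [p_getElem! k 1 (by omega), p_getElem! k 0 (by omega)]
    omega

lemma sortNum_eq_zero {p : List ℕ} (h : ¬ HasPeak p) : sortNum p = 0 := by
  apply Nat.sInf_eq_zero.mpr
  left
  simpa using h

lemma sortNum_eq_one {p : List ℕ} (h0 : HasPeak p) (h1 : ¬ HasPeak (SC231 p)) :
    sortNum p = 1 := by
  have hmem : 1 ∈ {k | ¬ HasPeak (SC231^[k] p)} := by
    simpa using h1
  apply le_antisymm (Nat.sInf_le hmem)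
  rcases Nat.eq_zero_or_pos (sortNum p) with h | h
  · rcases Nat.sInf_eq_zero.mp h with h' | h'
    · simp at h'; exact absurd h0 h'
    · rw [Set.eq_empty_iff_forall_notMem] at h'
      exact absurd hmem (h' 1)
  · exact h

lemma comp_map' (m : ℕ) :
    (1 :: (List.range' 2 m).reverse).map (fun i => (m+1) + 1 - i)
      = (m+1) :: List.range' 1 m := by
  have h2 : (List.range' 2 m).reverse.map (fun i => (m+1)+1-i) = List.range' 1 m := by
    apply List.ext_getElem (by simp)
    intro j hj hj'
    simp only [List.length_range'] at hj'
    simp only [List.getElem_map, List.getElem_reverse, List.getElem_range',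
      List.length_reverse, List.length_range']
    omega
  simp only [List.map_cons, h2]
  congr 1

lemma family (k : ℕ) :
    IsPermOf (k+3) (1 :: (List.range' 2 (k+2)).reverse) ∧
    sortNum (1 :: (List.range' 2 (k+2)).reverse) = 1 ∧
    sortNum ((1 :: (List.range' 2 (k+2)).reverse).map (fun i => (k+3) + 1 - i)) = 0 := by
  refine ⟨?_, ?_, ?_⟩
  · unfold IsPermOf
    rw [show k+3 = (k+2)+1 from rfl, List.range'_succ]
    exact List.Perm.cons 1 (List.reverse_perm _)
  · apply sortNum_eq_one (has_peak_p k)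
    rw [sc231_main]
    exact no_peak_desc (k+3)
  · have := comp_map' (k+2)
    rw [show (k+3)+1 = (k+2)+1+1 from rfl, this]
    exact sortNum_eq_zero (no_peak_comp (k+3) (k+2) (by omega))

/-- The permutation `1,9,8,7,6,5,4,3,2` has sort-number `1`, its complement
`9,1,2,3,4,5,6,7,8` has sort-number `0`; in particular the sum of the sort-numbers of a
permutation and its complement can equal `1` for arbitrarily large `n`. -/
theorem complement_sortNum_sum_one :
    sortNum [1, 9, 8, 7, 6, 5, 4, 3, 2] = 1 ∧
    sortNum [9, 1, 2, 3, 4, 5, 6, 7, 8] = 0 ∧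
    [9, 1, 2, 3, 4, 5, 6, 7, 8] =
      List.map (fun i => 10 - i) [1, 9, 8, 7, 6, 5, 4, 3, 2] ∧
    ∀ N : ℕ, ∃ n, N ≤ n ∧ ∃ p : List ℕ, IsPermOf n p ∧
      sortNum p + sortNum (p.map (fun i => n + 1 - i)) = 1 := by
  have key9 := family 6
  have e1 : (1 : ℕ) :: (List.range' 2 8).reverse = [1, 9, 8, 7, 6, 5, 4, 3, 2] := by decide
  have e2 : ([1, 9, 8, 7, 6, 5, 4, 3, 2].map (fun i => 10 - i) : List ℕ)
      = [9, 1, 2, 3, 4, 5, 6, 7, 8] := by decide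
  rw [e1] at key9
  refine ⟨key9.2.1, ?_, e2.symm, ?_⟩
  · rw [← e2]
    exact key9.2.2
  · intro N
    refine ⟨N + 3, by omega, 1 :: (List.range' 2 (N+2)).reverse, (family N).1, ?_⟩
    rw [(family N).2.1, (family N).2.2]
end
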